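/- Let N ≥ 1 and e ≥ 1 be integers, set A = ℂ[x₀,…,x_N]/⟨x₀^{e+1},…,x_N^{e+1}⟩ and ρ = e·(N+1). Let f be a homogeneous polynomial of degree k ≥ 0 and suppose that the multiplication map ×f : A_i → A_{i+k} is injective for every integer i ≥ 0 with 2i ≤ ρ − k. Then f is faithful: for every integer i ≥ 0, the multiplication map ×f : A_i → A_{i+k} is injective or surjective; moreover ×f : A_i → A_{i+k} is surjective for every i with 2i ≥ ρ − k. -/

import Mathlib

open MvPolynomial

/-- The degree-`i` graded piece of the quotient algebra `R/I`, where
`R = ℂ[x₀,…,x_N]` is graded by total degree: the image of the space of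
homogeneous polynomials of degree `i` under the quotient map. -/
noncomputable def gradedPiece {m : ℕ} (I : Ideal (MvPolynomial (Fin m) ℂ)) (i : ℕ) :
    Submodule ℂ (MvPolynomial (Fin m) ℂ ⧸ I) :=
  (homogeneousSubmodule (Fin m) ℂ i).map (Ideal.Quotient.mkₐ ℂ I).toLinearMap

namespace Aux

variable {m e : ℕ}

/-- The top exponent: every variable to the power `e`. -/
noncomputable def top (m e : ℕ) : Fin m →₀ ℕ :=
  Finsupp.equivFunOnFinite.symm fun _ => e

@[simp] lemma top_apply (j : Fin m) : top m e j = e := rfl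

lemma le_top_iff {a : Fin m →₀ ℕ} : a ≤ top m e ↔ ∀ j, a j ≤ e := by
  simp [Finsupp.le_def]

lemma degree_eq_sum_univ (d : Fin m →₀ ℕ) : d.degree = ∑ i, d i := by
  rw [Finsupp.degree]
  exact Finset.sum_subset (Finset.subset_univ _) (by
    intro x _ hx
    simpa using (Finsupp.notMem_support_iff.mp hx))

lemma top_degree : (top m e).degree = m * e := by
  rw [degree_eq_sum_univ]
  simp [Finset.sum_const, mul_comm]

section IdealLemmas

variable (I : Ideal (MvPolynomial (Fin m) ℂ))
  (hI : I = Ideal.span (Set.range fun i => (X i : MvPolynomial (Fin m) ℂ) ^ (e + 1)))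

include hI

/-- Coefficients of elements of `I` at exponents `≤ top` vanish. -/
lemma coeff_eq_zero_of_mem {p : MvPolynomial (Fin m) ℂ} (hp : p ∈ I)
    {b : Fin m →₀ ℕ} (hb : b ≤ top m e) : coeff b p = 0 := by
  subst hI
  induction hp using Submodule.span_induction generalizing b with
  | mem q hq =>
      obtain ⟨j, rfl⟩ := hq
      show coeff b ((X j : MvPolynomial (Fin m) ℂ) ^ (e+1)) = 0
      rw [X_pow_eq_monomial, coeff_monomial]
      split_ifs with h
      · exfalso
        have := le_top_iff.mp hb j
        rw [← h] at this
        simp at this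
      · rfl
  | zero => simp
  | add q r _ _ hq hr => simp [coeff_add, hq hb, hr hb]
  | smul r q _ hq =>
      rw [smul_eq_mul, coeff_mul]
      refine Finset.sum_eq_zero fun x hx => ?_
      have hxb : x.1 + x.2 = b := Finset.HasAntidiagonal.mem_antidiagonal.mp hx
      have : x.2 ≤ top m e := le_trans (by rw [← hxb]; exact le_add_self) hb
      rw [hq this, mul_zero]

/-- A monomial whose exponent is not `≤ top` lies in `I`. -/
lemma monomial_mem {a : Fin m →₀ ℕ} (ha : ¬ a ≤ top m e) (c : ℂ) :
    monomial a c ∈ I := by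
  rw [le_top_iff] at ha
  push_neg at ha
  obtain ⟨j, hj⟩ := ha
  have hgen : (X j : MvPolynomial (Fin m) ℂ) ^ (e + 1) ∈ I := by
    rw [hI]; exact Ideal.subset_span ⟨j, rfl⟩
  have haa : Finsupp.single j (e + 1) + (a - Finsupp.single j (e + 1)) = a := by
    ext i
    rw [Finsupp.add_apply, Finsupp.tsub_apply]
    rcases eq_or_ne i j with rfl | h
    · simp; omega
    · simp [Finsupp.single_apply, Ne.symm h]
  have key : monomial a c
      = (X j : MvPolynomial (Fin m) ℂ) ^ (e + 1)
        * monomial (a - Finsupp.single j (e + 1)) c := by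
    rw [X_pow_eq_monomial, monomial_mul, one_mul, haa]
  rw [key]
  exact I.mul_mem_right _ hgen

/-- If all low coefficients vanish, the polynomial is in `I`. -/
lemma mem_of_coeff_eq_zero {p : MvPolynomial (Fin m) ℂ}
    (h : ∀ a ≤ top m e, coeff a p = 0) : p ∈ I := by
  rw [p.as_sum]
  refine Submodule.sum_mem _ fun a ha => ?_
  by_cases hle : a ≤ top m e
  · rw [h a hle]; simp
  · exact monomial_mem I hI hle _

end IdealLemmas

end Aux

namespace Aux

variable {m e : ℕ}

variable (I : Ideal (MvPolynomial (Fin m) ℂ))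

lemma mem_gradedPiece_iff {i : ℕ} {u : MvPolynomial (Fin m) ℂ ⧸ I} :
    u ∈ gradedPiece I i ↔ ∃ p : MvPolynomial (Fin m) ℂ,
      p.IsHomogeneous i ∧ Ideal.Quotient.mk I p = u := by
  constructor
  · rintro ⟨p, hp, rfl⟩
    exact ⟨p, (mem_homogeneousSubmodule _ _).mp hp, rfl⟩
  · rintro ⟨p, hp, rfl⟩
    exact ⟨p, (mem_homogeneousSubmodule _ _).mpr hp, rfl⟩

section Phi

variable (e)
variable (hI : I = Ideal.span (Set.range fun i => (X i : MvPolynomial (Fin m) ℂ) ^ (e + 1)))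

/-- The socle functional: coefficient at the top monomial, descended to the quotient. -/
noncomputable def phi : (MvPolynomial (Fin m) ℂ ⧸ I) →ₗ[ℂ] ℂ :=
  (Submodule.liftQ (I.restrictScalars ℂ) (lcoeff ℂ (top m e))
    (fun p hp => coeff_eq_zero_of_mem I hI hp le_rfl)).comp
    (Submodule.Quotient.restrictScalarsEquiv ℂ (I : Submodule (MvPolynomial (Fin m) ℂ)
      (MvPolynomial (Fin m) ℂ))).symm.toLinearMap

lemma phi_mk (p : MvPolynomial (Fin m) ℂ) :
    phi e I hI (Ideal.Quotient.mk I p) = coeff (top m e) p := by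
  have hmk : Ideal.Quotient.mk I p = Submodule.Quotient.mk p := rfl
  rw [phi, LinearMap.comp_apply, hmk, LinearEquiv.coe_toLinearMap,
    Submodule.Quotient.restrictScalarsEquiv_symm_mk]
  rfl

end Phi

end Aux

namespace Aux

variable {m e : ℕ}
variable (I : Ideal (MvPolynomial (Fin m) ℂ))
variable (hI : I = Ideal.span (Set.range fun i => (X i : MvPolynomial (Fin m) ℂ) ^ (e + 1)))

include hI

lemma finiteDim : FiniteDimensional ℂ (MvPolynomial (Fin m) ℂ ⧸ I) := by
  classical
  let L := (Ideal.Quotient.mkₐ ℂ I).toLinearMap.comp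
    (Submodule.subtype (restrictDegree (Fin m) ℂ e))
  apply Module.Finite.of_surjective L
  intro v
  obtain ⟨p, rfl⟩ := Ideal.Quotient.mk_surjective v
  set p' := ∑ a ∈ p.support.filter (fun a => a ≤ top m e), monomial a (coeff a p) with hp'def
  have hp' : p' ∈ restrictDegree (Fin m) ℂ e := by
    rw [mem_restrictDegree]
    intro s hs j
    obtain ⟨a, ha, hs'⟩ := Finset.mem_biUnion.mp (support_sum hs)
    have : s = a := Finset.mem_singleton.mp (support_monomial_subset hs')
    subst this
    exact le_top_iff.mp (Finset.mem_filter.mp ha).2 j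
  refine ⟨⟨p', hp'⟩, ?_⟩
  show Ideal.Quotient.mk I p' = Ideal.Quotient.mk I p
  rw [Ideal.Quotient.eq]
  have hsplit : p' + ∑ a ∈ p.support.filter (fun a => ¬ a ≤ top m e),
      monomial a (coeff a p) = p := by
    rw [hp'def, Finset.sum_filter_add_sum_filter_not]
    exact p.as_sum.symm
  have hrest : ∑ a ∈ p.support.filter (fun a => ¬ a ≤ top m e),
      monomial a (coeff a p) ∈ I :=
    Submodule.sum_mem _ fun a ha => monomial_mem I hI (Finset.mem_filter.mp ha).2 _
  rw [← hsplit, sub_add_cancel_left]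
  exact I.neg_mem hrest

/-- Nondegeneracy of the pairing. -/
lemma nondeg {i : ℕ} {u : MvPolynomial (Fin m) ℂ ⧸ I}
    (hu : u ∈ gradedPiece I i) (hne : u ≠ 0) :
    ∃ v ∈ gradedPiece I (m * e - i), phi e I hI (u * v) ≠ 0 := by
  obtain ⟨p, hp, rfl⟩ := (mem_gradedPiece_iff I).mp hu
  have hpI : p ∉ I := fun h => hne (Ideal.Quotient.eq_zero_iff_mem.mpr h)
  obtain ⟨a, hale, hane⟩ : ∃ a ≤ top m e, coeff a p ≠ 0 := by
    by_contra h
    push_neg at h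
    exact hpI (mem_of_coeff_eq_zero I hI h)
  have hadeg : a.degree = i := by
    by_contra h
    exact hane (hp.coeff_eq_zero h)
  have haj : ∀ j, a j ≤ e := le_top_iff.mp hale
  have hsum : ∑ j, (top m e - a) j + ∑ j, a j = m * e := by
    rw [← Finset.sum_add_distrib]
    have : ∀ j : Fin m, (top m e - a) j + a j = e := by
      intro j
      rw [Finsupp.tsub_apply, top_apply]
      have := haj j; omega
    simp only [this]
    simp [Finset.sum_const, mul_comm]
  have hai : ∑ j, a j = i := by rw [← degree_eq_sum_univ, hadeg]
  have hbdeg : (top m e - a).degree = m * e - i := by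
    rw [degree_eq_sum_univ]; omega
  refine ⟨Ideal.Quotient.mk I (monomial (top m e - a) 1), ?_, ?_⟩
  · exact (mem_gradedPiece_iff I).mpr ⟨_, isHomogeneous_monomial _ hbdeg, rfl⟩
  · rw [← map_mul, phi_mk, coeff_mul_monomial', if_pos tsub_le_self, mul_one]
    have : top m e - (top m e - a) = a := by
      ext j
      rw [Finsupp.tsub_apply, Finsupp.tsub_apply, top_apply]
      have := haj j; omega
    rwa [this]

omit hI

lemma mul_graded {j k : ℕ} {f : MvPolynomial (Fin m) ℂ} (hf : f.IsHomogeneous k)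
    {v : MvPolynomial (Fin m) ℂ ⧸ I} (hv : v ∈ gradedPiece I j) :
    Ideal.Quotient.mk I f * v ∈ gradedPiece I (j + k) := by
  obtain ⟨q, hq, rfl⟩ := (mem_gradedPiece_iff I).mp hv
  exact (mem_gradedPiece_iff I).mpr ⟨f * q, by rw [add_comm]; exact hf.mul hq, map_mul _ _ _⟩

include hI

lemma high_degree_zero {d : ℕ} (hd : m * e < d) {u : MvPolynomial (Fin m) ℂ ⧸ I}
    (hu : u ∈ gradedPiece I d) : u = 0 := by
  obtain ⟨p, hp, rfl⟩ := (mem_gradedPiece_iff I).mp hu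
  rw [Ideal.Quotient.eq_zero_iff_mem]
  rw [p.as_sum]
  refine Submodule.sum_mem _ fun a ha => ?_
  refine monomial_mem I hI (fun hle => ?_) _
  have hadeg : a.degree = d := by
    by_contra h
    exact (mem_support_iff.mp ha) (hp.coeff_eq_zero h)
  have : a.degree ≤ m * e := by
    rw [degree_eq_sum_univ]
    calc ∑ j, a j ≤ ∑ _j : Fin m, e := Finset.sum_le_sum fun j _ => le_top_iff.mp hle j
    _ = m * e := by simp [Finset.sum_const, mul_comm]
  omega

end Aux

namespace Aux

variable {m e : ℕ}
variable (I : Ideal (MvPolynomial (Fin m) ℂ))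
variable (hI : I = Ideal.span (Set.range fun i => (X i : MvPolynomial (Fin m) ℂ) ^ (e + 1)))

include hI

set_option maxHeartbeats 2000000 in
lemma surj_of_inj {f : MvPolynomial (Fin m) ℂ} {k : ℕ} (hf : f.IsHomogeneous k)
    (i : ℕ) (hik : i + k ≤ m * e)
    (hinjj : Set.InjOn (fun x => Ideal.Quotient.mk I f * x)
      (gradedPiece I (m * e - i - k))) :
    Set.SurjOn (fun x => Ideal.Quotient.mk I f * x) (gradedPiece I i)
      (gradedPiece I (i + k)) := by
  classical
  have hfd : FiniteDimensional ℂ (MvPolynomial (Fin m) ℂ ⧸ I) := finiteDim I hI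
  set F : MvPolynomial (Fin m) ℂ ⧸ I := Ideal.Quotient.mk I f with hF
  set j := m * e - i - k with hjdef
  set T : Submodule ℂ (MvPolynomial (Fin m) ℂ ⧸ I) :=
    Submodule.map (LinearMap.mulLeft ℂ F) (gradedPiece I i) with hT
  have hTle : T ≤ gradedPiece I (i + k) := by
    rintro _ ⟨u, hu, rfl⟩
    exact mul_graded I hf hu
  set B := (LinearMap.mul ℂ (MvPolynomial (Fin m) ℂ ⧸ I)).compr₂ (phi e I hI) with hB
  have hBa : ∀ u v : MvPolynomial (Fin m) ℂ ⧸ I, B u v = phi e I hI (u * v) :=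
    fun u v => rfl
  -- first injection : A_{i+k} ↪ Dual A_j
  set θ₁ := B.domRestrict₁₂ (gradedPiece I (i + k)) (gradedPiece I j) with hθ₁
  have hθ₁inj : Function.Injective θ₁ := by
    rw [← LinearMap.ker_eq_bot, Submodule.eq_bot_iff]
    rintro u hu
    rw [LinearMap.mem_ker] at hu
    by_contra hne
    have hune : (u : MvPolynomial (Fin m) ℂ ⧸ I) ≠ 0 := by
      intro h; exact hne (Subtype.ext h)
    obtain ⟨v, hv, hφ⟩ := nondeg I hI u.2 hune
    have hjv : m * e - (i + k) = j := by omega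
    rw [hjv] at hv
    have h0 : θ₁ u ⟨v, hv⟩ = 0 := by rw [hu]; rfl
    rw [hθ₁, LinearMap.domRestrict₁₂_apply, hBa] at h0
    exact hφ h0
  -- second injection : A_j ↪ Dual T
  set θ₂ := (B.domRestrict₁₂ T (gradedPiece I j)).flip with hθ₂
  have hθ₂inj : Function.Injective θ₂ := by
    rw [← LinearMap.ker_eq_bot, Submodule.eq_bot_iff]
    rintro v hv
    rw [LinearMap.mem_ker] at hv
    have hFv0 : F * (v : MvPolynomial (Fin m) ℂ ⧸ I) = 0 := by
      by_contra hne
      have hFv : F * (v : MvPolynomial (Fin m) ℂ ⧸ I) ∈ gradedPiece I (j + k) :=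
        mul_graded I hf v.2
      have hjk : j + k = m * e - i := by omega
      rw [hjk] at hFv
      obtain ⟨u, hu, hφ⟩ := nondeg I hI hFv hne
      have hui : m * e - (m * e - i) = i := by omega
      rw [hui] at hu
      have htmem : F * u ∈ T := ⟨u, hu, rfl⟩
      have h0 : θ₂ v ⟨F * u, htmem⟩ = 0 := by rw [hv]; rfl
      rw [hθ₂, LinearMap.flip_apply, LinearMap.domRestrict₁₂_apply, hBa] at h0
      apply hφ
      rw [show F * (v : MvPolynomial (Fin m) ℂ ⧸ I) * u
          = F * u * (v : MvPolynomial (Fin m) ℂ ⧸ I) by ring]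
      exact h0
    have hv0 : (v : MvPolynomial (Fin m) ℂ ⧸ I) = 0 := by
      apply hinjj v.2 (Submodule.zero_mem _ : (0 : MvPolynomial (Fin m) ℂ ⧸ I) ∈ _)
      simpa using hFv0
    exact Subtype.ext hv0
  -- dimension count
  have h1 : Module.finrank ℂ (gradedPiece I (i + k)) ≤ Module.finrank ℂ (gradedPiece I j) := by
    have := LinearMap.finrank_le_finrank_of_injective hθ₁inj
    rwa [Subspace.dual_finrank_eq] at this
  have h2 : Module.finrank ℂ (gradedPiece I j) ≤ Module.finrank ℂ T := by
    have := LinearMap.finrank_le_finrank_of_injective hθ₂inj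
    rwa [Subspace.dual_finrank_eq] at this
  have hTeq : T = gradedPiece I (i + k) :=
    Submodule.eq_of_le_of_finrank_le hTle (h1.trans h2)
  intro w hw
  have hw' : w ∈ gradedPiece I (i + k) := hw
  rw [← hTeq] at hw'
  obtain ⟨u, hu, rfl⟩ := hw'
  exact ⟨u, hu, rfl⟩

end Aux

/-- For `A = ℂ[x₀,…,x_N]/⟨x₀^{e+1},…,x_N^{e+1}⟩` and `ρ = e(N+1)`: if `f` is homogeneous
of degree `k` and `×f : A_i → A_{i+k}` is injective for all `i` with `2i ≤ ρ − k`, then `f`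
is faithful (all multiplication maps `×f` have maximal rank), and moreover
`×f : A_i → A_{i+k}` is surjective for all `i` with `2i ≥ ρ − k`. -/
theorem faithful_of_injective_in_low_degrees
    (N e : ℕ) (hN : 1 ≤ N) (he : 1 ≤ e)
    (I : Ideal (MvPolynomial (Fin (N + 1)) ℂ))
    (hI : I = Ideal.span
      (Set.range fun i => (X i : MvPolynomial (Fin (N + 1)) ℂ) ^ (e + 1)))
    (ρ : ℕ) (hρ : ρ = e * (N + 1))
    (f : MvPolynomial (Fin (N + 1)) ℂ) (k : ℕ) (hf : f.IsHomogeneous k)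
    (hinj : ∀ i : ℕ, (2 * i : ℤ) ≤ (ρ : ℤ) - (k : ℤ) →
      Set.InjOn (fun x => Ideal.Quotient.mk I f * x) (gradedPiece I i)) :
    (∀ i : ℕ,
      Set.InjOn (fun x => Ideal.Quotient.mk I f * x) (gradedPiece I i) ∨
      Set.SurjOn (fun x => Ideal.Quotient.mk I f * x) (gradedPiece I i)
        (gradedPiece I (i + k))) ∧
    (∀ i : ℕ, (ρ : ℤ) - (k : ℤ) ≤ (2 * i : ℤ) →
      Set.SurjOn (fun x => Ideal.Quotient.mk I f * x) (gradedPiece I i)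
        (gradedPiece I (i + k))) := by
  have hme : (N + 1) * e = ρ := by rw [hρ]; ring
  have main2 : ∀ i : ℕ, (ρ : ℤ) - (k : ℤ) ≤ (2 * i : ℤ) →
      Set.SurjOn (fun x => Ideal.Quotient.mk I f * x) (gradedPiece I i)
        (gradedPiece I (i + k)) := by
    intro i hge
    by_cases hik : i + k ≤ (N + 1) * e
    · exact Aux.surj_of_inj I hI hf i hik (hinj _ (by omega))
    · intro w hw
      have hw' : w ∈ gradedPiece I (i + k) := hw
      have hw0 : w = 0 := Aux.high_degree_zero I hI (by omega) hw'
      refine ⟨0, by simpa using (gradedPiece I i).zero_mem, ?_⟩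
      simp [hw0]
  refine ⟨fun i => ?_, main2⟩
  by_cases hle : (2 * i : ℤ) ≤ (ρ : ℤ) - (k : ℤ)
  · exact Or.inl (hinj i hle)
  · exact Or.inr (main2 i (by omega))
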